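/- Fix a real number a > 0 and set a4 = a5 = a6 = a7 = a. Every point x = (c4, s4, c5, s5, c6, s6, c7, s7) ∈ ℝ^8 with Q(x) = 0 and s6 = -s4 satisfies at least one of the following three sets of conditions: (i) c4 = c6, s5 = s7*c6 - c7*s4, and c5 = c7*c6 + s7*s4; (ii) c4 = 0, c6 = 0, and s4 = -1; (iii) c4 = -c6, s5 = -c7, and c5 = s7. -/

import Mathlib

/-- The constraint map `Q : ℝ^8 → ℝ^6` of the subsystem 4567, in the variables
`(c4, s4, c5, s5, c6, s6, c7, s7)`. -/
noncomputable def Q4567 (a4 a5 a6 a7 : ℝ) (x : Fin 8 → ℝ) : Fin 6 → ℝ :=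
  ![a4 * (x 1 * x 2 + x 0 * x 3) + a5 * x 2 - a6 * (x 4 * x 6 - x 5 * x 7) - a7 * x 7,
    a4 * (x 0 * x 2 - x 1 * x 3) - a5 * x 3 + a6 * (x 5 * x 6 + x 4 * x 7) - a7 * x 6,
    x 0 ^ 2 + x 1 ^ 2 - 1,
    x 2 ^ 2 + x 3 ^ 2 - 1,
    x 4 ^ 2 + x 5 ^ 2 - 1,
    x 6 ^ 2 + x 7 ^ 2 - 1]

/-- When `a4 = a5 = a6 = a7 = a > 0`, every configuration of the subsystem 4567
with `s6 = -s4` lies in one of the three components `I1`, `I2`, `I3`. -/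
theorem equalLengths_three_components (a : ℝ) (ha : a > 0)
    (c4 s4 c5 s5 c6 s6 c7 s7 : ℝ)
    (hQ : Q4567 a a a a ![c4, s4, c5, s5, c6, s6, c7, s7] = 0)
    (hs6 : s6 = -s4) :
    (c4 = c6 ∧ s5 = s7 * c6 - c7 * s4 ∧ c5 = c7 * c6 + s7 * s4) ∨
    (c4 = 0 ∧ c6 = 0 ∧ s4 = -1) ∨
    (c4 = -c6 ∧ s5 = -c7 ∧ c5 = s7) := by
  subst hs6
  have h1 := congrFun hQ 0
  have h2 := congrFun hQ 1
  have h3 := congrFun hQ 2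
  have h4 := congrFun hQ 3
  have h5 := congrFun hQ 4
  have v5 : (![c4, s4, c5, s5, c6, -s4, c7, s7] : Fin 8 → ℝ) 5 = -s4 := rfl
  have v6 : (![c4, s4, c5, s5, c6, -s4, c7, s7] : Fin 8 → ℝ) 6 = c7 := rfl
  have v7 : (![c4, s4, c5, s5, c6, -s4, c7, s7] : Fin 8 → ℝ) 7 = s7 := rfl
  simp [Q4567] at h1 h2 h3 h4 h5

  have hane : a ≠ 0 := ne_of_gt ha
  -- divide the first two equations by a
  have e1 : s4 * c5 + c4 * s5 + c5 - (c6 * c7 - (-s4) * s7) - s7 = 0 := by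
    rcases mul_eq_zero.mp
      (show a * (s4 * c5 + c4 * s5 + c5 - (c6 * c7 - (-s4) * s7) - s7) = 0 by
        linear_combination h1) with h | h
    · exact absurd h hane
    · exact h
  have e2 : c4 * c5 - s4 * s5 - s5 + ((-s4) * c7 + c6 * s7) - c7 = 0 := by
    rcases mul_eq_zero.mp
      (show a * (c4 * c5 - s4 * s5 - s5 + ((-s4) * c7 + c6 * s7) - c7) = 0 by
        linear_combination h2) with h | h
    · exact absurd h hane
    · exact h
  -- c6^2 = c4^2
  have hc6 : (c6 - c4) * (c6 + c4) = 0 := by linear_combination h5 - h3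
  by_cases hs4 : s4 = -1
  · -- degenerate case: c4 = 0, c6 = 0
    have hc4 : c4 = 0 := by
      have : c4 ^ 2 = 0 := by rw [hs4] at h3; linarith [h3]
      exact pow_eq_zero_iff (n := 2) (by norm_num) |>.mp this
    have hc6' : c6 = 0 := by
      rcases mul_eq_zero.mp hc6 with h | h
      · linarith
      · linarith
    exact Or.inr (Or.inl ⟨hc4, hc6', hs4⟩)
  · have hs4le : -1 ≤ s4 := by nlinarith [sq_nonneg c4]
    have hs4lt : -1 < s4 := lt_of_le_of_ne hs4le (Ne.symm hs4)
    have hne : (2 + 2 * s4) ≠ 0 := ne_of_gt (by linarith)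
    rcases mul_eq_zero.mp hc6 with h | h
    · -- c6 = c4
      have hc : c6 = c4 := by linarith
      subst hc
      have hu : (2 + 2 * s4) * (c5 - (c7 * c6 + s7 * s4)) = 0 := by
        linear_combination (1 + s4) * e1 + c6 * e2 - (c5 + s7) * h3
      have hv : (2 + 2 * s4) * (s5 - (s7 * c6 - c7 * s4)) = 0 := by
        linear_combination c6 * e1 - (1 + s4) * e2 + (c7 - s5) * h3
      have hu' := (mul_eq_zero.mp hu).resolve_left hne
      have hv' := (mul_eq_zero.mp hv).resolve_left hne
      exact Or.inl ⟨rfl, by linarith, by linarith⟩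
    · -- c6 = -c4
      have hc : c4 = -c6 := by linarith
      have hc' : c6 = -c4 := by linarith
      have hu : (2 + 2 * s4) * (c5 - s7) = 0 := by
        rw [hc'] at e1 e2
        linear_combination (1 + s4) * e1 + c4 * e2 - (c5 - s7) * h3
      have hv : (2 + 2 * s4) * (s5 + c7) = 0 := by
        rw [hc'] at e1 e2
        linear_combination c4 * e1 - (1 + s4) * e2 - (s5 + c7) * h3
      have hu' := (mul_eq_zero.mp hu).resolve_left hne
      have hv' := (mul_eq_zero.mp hv).resolve_left hne
      exact Or.inr (Or.inr ⟨hc, by linarith, by linarith⟩)
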